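/- Let G be a cubic graph and let S be a set of vertices such that |N_1(S)| = 2|S| and |N_2(S)| = 4|S|. Then the number of edges of G with both endpoints in S is exactly |S|/2, and every vertex of N_1(S) has exactly one neighbour in S. -/

import Mathlib

open Finset Filter
open scoped Classical BigOperators Topology

namespace BiasedWalk

/-- Configuration points: each vertex of `Fin n` has 3 points. -/
abbrev Pt (n : ℕ) := Fin n × Fin 3

/-- A pairing of the configuration points: a fixed-point-free involution,
uniform among which generates the random cubic configuration multigraph. -/
abbrev Pairing (n : ℕ) := {μ : Equiv.Perm (Pt n) // ∀ p, μ p ≠ p ∧ μ (μ p) = p}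

/-- The filter of large even `n`. -/
def evenAtTop : Filter ℕ := Filter.atTop ⊓ Filter.principal {n | Even n}

/-- Extend a finite tuple to an `ℕ`-indexed sequence (junk value beyond the end). -/
def extFin {n m : ℕ} (f : Fin (m + 1) → Pt n) : ℕ → Pt n :=
  fun j => if h : j < m + 1 then f ⟨j, h⟩ else f ⟨0, Nat.succ_pos m⟩

/-- Probability of the `i`-th step of the biased (unvisited-edge) walk, written at the level
of configuration points: the walk `w 0, w 1, w 2, …` lists the points visited, with
`w (2i+1) = μ (w (2i))` the traversal of the `i`-th edge, and `w (2i+2)` the point of the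
current vertex through which the walk leaves: uniform among points of red (untraversed)
edges if any, otherwise uniform among the 3 (blue) points of the vertex. -/
noncomputable def stepProb {n : ℕ} (μ : Pairing n) (w : ℕ → Pt n) (i : ℕ) : ℝ :=
  (if w (2 * i + 1) = μ.1 (w (2 * i)) then (1 : ℝ) else 0) *
  (let vis : Finset (Pt n) := ((List.range (2 * i + 2)).map w).toFinset
   let R : Finset (Pt n) := Finset.univ.filter
      (fun p : Pt n => p.1 = (w (2 * i + 1)).1 ∧ p ∉ vis ∧ μ.1 p ∉ vis)
   if R.Nonempty then (if w (2 * i + 2) ∈ R then (R.card : ℝ)⁻¹ else 0)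
   else (if (w (2 * i + 2)).1 = (w (2 * i + 1)).1 then (1 : ℝ) / 3 else 0))

/-- Probability that, for a fixed pairing `μ`, the biased walk `W_k` visits exactly the
points `w 0, …, w (2k)` in this order (the start point is uniform among all `3n` points). -/
noncomputable def pointWalkProb {n : ℕ} (μ : Pairing n) (k : ℕ) (w : ℕ → Pt n) : ℝ :=
  (1 / (3 * (n : ℝ))) * ∏ i ∈ Finset.range k, stepProb μ w i

/-- Joint probability over the uniform pairing and the walk randomness. -/
noncomputable def jointProb (n k : ℕ) (w : ℕ → Pt n) : ℝ :=
  (∑ μ : Pairing n, pointWalkProb μ k w) / (Fintype.card (Pairing n) : ℝ)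

/-- Number of distinct configuration points among the first `m` entries of the walk. -/
def dCount {n : ℕ} (w : ℕ → Pt n) (m : ℕ) : ℕ := (((List.range m).map w).toFinset).card

/-- Number of distinct vertices visited by `W_k`. -/
def vCount {n : ℕ} (w : ℕ → Pt n) (k : ℕ) : ℕ :=
  (((List.range (k + 1)).map (fun i => (w (2 * i)).1)).toFinset).card

/-- `E_G[C_E(t)]`: expected number of steps of the biased walk on the multigraph given by the
pairing `μ` until `t` distinct edges have been traversed (`= E[C(t) ⬝ 1_{C(t) < ∞}]`). -/
noncomputable def expCEdgeG {n : ℕ} (μ : Pairing n) (t : ℕ) : ℝ :=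
  ∑' k : ℕ, (k : ℝ) * ∑ f : Fin (2 * k + 1) → Pt n,
    (if 2 * t ≤ dCount (extFin f) (2 * k + 1) ∧ ∀ j < k, dCount (extFin f) (2 * j + 1) < 2 * t
     then pointWalkProb μ k (extFin f) else 0)

/-- `E_G[C_V(s)]`: expected number of steps until `s` distinct vertices have been visited. -/
noncomputable def expCVertG {n : ℕ} (μ : Pairing n) (s : ℕ) : ℝ :=
  ∑' k : ℕ, (k : ℝ) * ∑ f : Fin (2 * k + 1) → Pt n,
    (if s ≤ vCount (extFin f) k ∧ ∀ j < k, vCount (extFin f) j < s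
     then pointWalkProb μ k (extFin f) else 0)

/-- `E[C(t)]` over the joint randomness of the uniform pairing and the walk. -/
noncomputable def expCEdge (n t : ℕ) : ℝ :=
  (∑ μ : Pairing n, expCEdgeG μ t) / (Fintype.card (Pairing n) : ℝ)

/-- `E[C_V(s)]` over the joint randomness of the uniform pairing and the walk. -/
noncomputable def expCVert (n s : ℕ) : ℝ :=
  (∑ μ : Pairing n, expCVertG μ s) / (Fintype.card (Pairing n) : ℝ)

/-- Probability, over the joint randomness of the uniform pairing and the walk, that at some
step `k` the trajectory satisfies `Q` (decomposed over the first such step). -/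
noncomputable def walkEventProb (n : ℕ) (Q : Pairing n → (ℕ → Pt n) → ℕ → Prop) : ℝ :=
  (∑ μ : Pairing n, ∑' k : ℕ, ∑ f : Fin (2 * k + 1) → Pt n,
    (if Q μ (extFin f) k ∧ ∀ j < k, ¬Q μ (extFin f) j
     then pointWalkProb μ k (extFin f) else 0)) /
  (Fintype.card (Pairing n) : ℝ)

/-- `W_k = W(t)`: step `k` is the first at which `2t - 1` distinct points have been visited. -/
def atTime {n : ℕ} (t : ℕ) (w : ℕ → Pt n) (k : ℕ) : Prop :=
  dCount w (2 * k + 1) = 2 * t - 1 ∧ ∀ j < k, dCount w (2 * j + 1) < 2 * t - 1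

/-- Points visited by `W_k`. -/
def visSet {n : ℕ} (w : ℕ → Pt n) (k : ℕ) : Finset (Pt n) :=
  ((List.range (2 * k + 1)).map w).toFinset

/-- Number of red (untraversed) edge-endpoints at vertex `v` after `W_k`. -/
def redDeg {n : ℕ} (μ : Pairing n) (w : ℕ → Pt n) (k : ℕ) (v : Fin n) : ℕ :=
  (Finset.univ.filter (fun p : Pt n =>
    p.1 = v ∧ p ∉ visSet w k ∧ μ.1 p ∉ visSet w k)).card

/-- `X_i`: number of vertices incident with exactly `i` red (untraversed) edges. -/
def Xcount {n : ℕ} (μ : Pairing n) (w : ℕ → Pt n) (k i : ℕ) : ℕ :=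
  (Finset.univ.filter (fun v : Fin n => redDeg μ w k v = i)).card

/-- `X̄`: set of vertices incident with at least one red edge. -/
def XbarSet {n : ℕ} (μ : Pairing n) (w : ℕ → Pt n) (k : ℕ) : Finset (Fin n) :=
  Finset.univ.filter (fun v : Fin n => 1 ≤ redDeg μ w k v)

/-- The `i`-th edge traversed by the walk, as an unordered pair of points. -/
def eSeq {n : ℕ} (w : ℕ → Pt n) (i : ℕ) : Sym2 (Pt n) := s(w (2 * i), w (2 * i + 1))

/-- `Φ`: number of green edges, i.e. edges traversed exactly once by `W_k`. -/
def greenCount {n : ℕ} (w : ℕ → Pt n) (k : ℕ) : ℕ :=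
  ((((List.range k).map (eSeq w)).toFinset).filter
    (fun e => ((List.range k).map (eSeq w)).count e = 1)).card

/-- Vertex sequence `v_1, …, v_{k+1}` of the walk `W_k`. -/
def vList {n : ℕ} (w : ℕ → Pt n) (k : ℕ) : List (Fin n) :=
  (List.range (k + 1)).map (fun i => (w (2 * i)).1)

/-- `Y`: vertices visited and left exactly once by `W_k` (the green vertices). -/
def Yset {n : ℕ} (w : ℕ → Pt n) (k : ℕ) : Finset (Fin n) :=
  Finset.univ.filter (fun v : Fin n => (vList w k).count v = 1 ∧ v ≠ (w (2 * k)).1)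

/-- The contracted walk `⟨W⟩`: delete the points lying at vertices of `Y`, so that every
green bridge is replaced by a single (green) edge. -/
def contrWalk {n : ℕ} (w : ℕ → Pt n) (k : ℕ) : List (Pt n) :=
  ((List.range (2 * k + 1)).map w).filter (fun p => decide (p.1 ∉ Yset w k))

/-- `P([W_k] = [w])`: probability of the equivalence class of `w`. -/
noncomputable def classProb (n k : ℕ) (w : ℕ → Pt n) : ℝ :=
  ∑ f : Fin (2 * k + 1) → Pt n,
    (if contrWalk (extFin f) k = contrWalk w k ∧ Yset (extFin f) k = Yset w k
     then jointProb n k (extFin f) else 0)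

/-- The (simple) graph on the vertex set underlying the multigraph of a pairing. -/
def pairingGraph {n : ℕ} (μ : Pairing n) : SimpleGraph (Fin n) where
  Adj v u := v ≠ u ∧ ∃ p : Pt n, p.1 = v ∧ (μ.1 p).1 = u
  symm := ⟨by
    rintro v u ⟨hne, p, hp, hq⟩
    refine ⟨hne.symm, μ.1 p, hq, ?_⟩
    rw [(μ.2 p).2, hp]⟩
  loopless := ⟨by rintro v ⟨hne, -⟩; exact hne rfl⟩

/-- Connectivity of the multigraph given by a pairing. -/
def PConnected {n : ℕ} (μ : Pairing n) : Prop := (pairingGraph μ).Connected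

/-- The pairing produces a simple graph: no loops and no parallel edges. -/
def IsSimple {n : ℕ} (μ : Pairing n) : Prop :=
  (∀ p : Pt n, (μ.1 p).1 ≠ p.1) ∧
  (∀ p q : Pt n, p.1 = q.1 → (μ.1 p).1 = (μ.1 q).1 → q = p ∨ q = μ.1 p)

/-- Cyclic successor on `Fin k`. -/
def cycSucc {k : ℕ} (i : Fin k) : Fin k := ⟨(i.val + 1) % k, Nat.mod_lt _ i.pos⟩

/-- Directed rooted representations of cycles of length `k` in the multigraph of `μ`:
`c i` is the point through which the cycle leaves its `i`-th vertex.  Each cycle (counted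
up to rotation and reflection) has exactly `2k` such representations. -/
def cycleSeqs {n : ℕ} (μ : Pairing n) (k : ℕ) : Finset (Fin k → Pt n) :=
  Finset.univ.filter (fun c =>
    (∀ i : Fin k, (μ.1 (c i)).1 = (c (cycSucc i)).1 ∧ c (cycSucc i) ≠ μ.1 (c i)) ∧
    Function.Injective (fun i : Fin k => (c i).1))

/-- Number of cycles of length at most `ω` in the multigraph of `μ`. -/
def numCyclesUpTo {n : ℕ} (μ : Pairing n) (ω : ℕ) : ℕ :=
  ∑ k ∈ Finset.Icc 1 ω, (cycleSeqs μ k).card / (2 * k)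

/-- Directed representations of paths of length `r` in the multigraph of `μ` with both
endpoints in `S` and containing no edge joining two vertices of `S`; for `i < r`, `c i` is
the point through which the path leaves its `i`-th vertex, and `c r` is the final arrival
point.  Each such (undirected) path has exactly two directed representations. -/
noncomputable def mPathSeqs {n : ℕ} (μ : Pairing n) (S : Finset (Fin n)) (r : ℕ) :
    Finset (Fin (r + 1) → Pt n) :=
  Finset.univ.filter (fun c =>
    (∀ i : ℕ, (h : i + 1 ≤ r) →
      (μ.1 (c ⟨i, by omega⟩)).1 = (c ⟨i + 1, by omega⟩).1 ∧
      (i + 1 < r → c ⟨i + 1, by omega⟩ ≠ μ.1 (c ⟨i, by omega⟩)) ∧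
      (i + 1 = r → c ⟨i + 1, by omega⟩ = μ.1 (c ⟨i, by omega⟩))) ∧
    Function.Injective (fun i : Fin (r + 1) => (c i).1) ∧
    (c 0).1 ∈ S ∧ (c (Fin.last r)).1 ∈ S ∧
    (∀ i : ℕ, (h : i + 1 ≤ r) → ¬((c ⟨i, by omega⟩).1 ∈ S ∧ (μ.1 (c ⟨i, by omega⟩)).1 ∈ S)))

/-- Twice the number of edges of the multigraph of `μ` with both endpoints in `S`
(each such edge contributes both of its points). -/
def ptsWithin {n : ℕ} (μ : Pairing n) (S : Finset (Fin n)) : ℕ :=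
  (Finset.univ.filter (fun p : Pt n => p.1 ∈ S ∧ (μ.1 p).1 ∈ S)).card

/-- `S` is a root set of order `ℓ` in the multigraph of `μ`. -/
def IsRootSetM {n : ℕ} (μ : Pairing n) (S : Finset (Fin n)) (ℓ : ℝ) : Prop :=
  ℓ ^ 5 ≤ (S.card : ℝ) ∧
  (S.card : ℝ) / 2 ≤ (ptsWithin μ S : ℝ) / 2 ∧
  (ptsWithin μ S : ℝ) / 2 ≤ (1 / 2 + (ℓ ^ 3)⁻¹) * (S.card : ℝ) ∧
  (∑ r ∈ Finset.Icc 1 ⌊ℓ⌋₊, ((mPathSeqs μ S r).card : ℝ)) ≤ 2 * (S.card : ℝ) / ℓ ^ 3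

/-! ### Simple random walks on (cubic) simple graphs -/

/-- Transition matrix of the simple random walk on a cubic graph. -/
noncomputable def transMat {V : Type*} [Fintype V] (G : SimpleGraph V) : Matrix V V ℝ :=
  Matrix.of (fun v w => if G.Adj v w then (1 : ℝ) / 3 else 0)

/-- `λ(G)`: the second largest absolute value of an eigenvalue of the (symmetric) transition
matrix, expressed variationally on the orthogonal complement of the constants. -/
noncomputable def lambda2 {V : Type*} [Fintype V] (G : SimpleGraph V) : ℝ :=
  sSup {r : ℝ | ∃ f : V → ℝ, (∑ v, f v) = 0 ∧ (∑ v, (f v) ^ 2) = 1 ∧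
    r = |∑ v, ∑ w, f v * transMat G v w * f w|}

/-- `N_d(S)`: vertices at graph distance exactly `d` from the set `S`. -/
def sphereSet {V : Type*} (G : SimpleGraph V) (S : Set V) (d : ℕ) : Set V :=
  {v | (∃ s ∈ S, G.dist v s = d) ∧ ∀ s ∈ S, d ≤ G.dist v s}

/-- Probability that the simple random walk started from the stationary (uniform)
distribution first hits `S` at step `k`. -/
noncomputable def hitProb {V : Type*} [Fintype V] (G : SimpleGraph V) (S : Finset V)
    (k : ℕ) : ℝ :=
  ∑ f : Fin (k + 1) → V,
    (if f (Fin.last k) ∈ S ∧ (∀ i : Fin (k + 1), i ≠ Fin.last k → f i ∉ S) then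
      (1 / (Fintype.card V : ℝ)) * ∏ i : Fin k, transMat G (f i.castSucc) (f i.succ) else 0)

/-- `E_π[H(S)]`: expected hitting time of `S` from the stationary distribution. -/
noncomputable def expHit {V : Type*} [Fintype V] (G : SimpleGraph V) (S : Finset V) : ℝ :=
  ∑' k : ℕ, (k : ℝ) * hitProb G S k

/-- A cubic (3-regular) graph. -/
def IsCubic {V : Type*} (G : SimpleGraph V) : Prop := ∀ v, (G.neighborSet v).ncard = 3

/-- Directed rooted representations of cycles of length `k` in a simple graph. -/
noncomputable def gCycleSeqs {V : Type*} [Fintype V] (G : SimpleGraph V) (k : ℕ) : Finset (Fin k → V) :=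
  Finset.univ.filter (fun c =>
    Function.Injective c ∧ ∀ i : Fin k, G.Adj (c i) (c (cycSucc i)))

/-- Number of cycles of length at most `ω` of a simple graph (cycles have length `≥ 3`). -/
noncomputable def gNumCyclesUpTo {V : Type*} [Fintype V] (G : SimpleGraph V) (ω : ℕ) : ℕ :=
  ∑ k ∈ Finset.Icc 3 ω, (gCycleSeqs G k).card / (2 * k)

/-- Directed representations of paths of length `r` in a simple graph with endpoints in `S`
and containing no edge joining two vertices of `S`. -/
noncomputable def gPathSeqs {V : Type*} [Fintype V] (G : SimpleGraph V) (S : Finset V) (r : ℕ) :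
    Finset (Fin (r + 1) → V) :=
  Finset.univ.filter (fun c =>
    Function.Injective c ∧
    (∀ i : ℕ, (h : i + 1 ≤ r) → G.Adj (c ⟨i, by omega⟩) (c ⟨i + 1, by omega⟩)) ∧
    c 0 ∈ S ∧ c (Fin.last r) ∈ S ∧
    (∀ i : ℕ, (h : i + 1 ≤ r) → ¬(c ⟨i, by omega⟩ ∈ S ∧ c ⟨i + 1, by omega⟩ ∈ S)))

/-- Twice the number of edges with both endpoints in `S` (ordered adjacent pairs in `S`). -/
noncomputable def edgesIn2 {V : Type*} [Fintype V] (G : SimpleGraph V) (S : Finset V) : ℕ :=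
  (Finset.univ.filter (fun q : V × V => G.Adj q.1 q.2 ∧ q.1 ∈ S ∧ q.2 ∈ S)).card

/-- `S` is a root set of order `ℓ` in the simple graph `G`. -/
def IsRootSetG {V : Type*} [Fintype V] (G : SimpleGraph V) (S : Finset V) (ℓ : ℝ) : Prop :=
  ℓ ^ 5 ≤ (S.card : ℝ) ∧
  (S.card : ℝ) / 2 ≤ (edgesIn2 G S : ℝ) / 2 ∧
  (edgesIn2 G S : ℝ) / 2 ≤ (1 / 2 + (ℓ ^ 3)⁻¹) * (S.card : ℝ) ∧
  (∑ r ∈ Finset.Icc 1 ⌊ℓ⌋₊, ((gPathSeqs G S r).card : ℝ)) ≤ 2 * (S.card : ℝ) / ℓ ^ 3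

/-- `δ(t) = (3n - 2t)/(3n)`. -/
noncomputable def deltaR (n t : ℕ) : ℝ := ((3 * n : ℝ) - 2 * (t : ℝ)) / (3 * (n : ℝ))

end BiasedWalk

namespace BiasedWalk

/-- Fraction of pairings producing a simple graph (i.e. of random cubic graphs)
that satisfy `P`. -/
noncomputable def simpleFrac (n : ℕ) (P : Pairing n → Prop) : ℝ :=
  ((Finset.univ.filter (fun μ : Pairing n => IsSimple μ ∧ P μ)).card : ℝ) /
    ((Finset.univ.filter (fun μ : Pairing n => IsSimple μ)).card : ℝ)

/-- Fraction of all pairings (i.e. of random cubic configuration multigraphs)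
that satisfy `P`. -/
noncomputable def pairingFrac (n : ℕ) (P : Pairing n → Prop) : ℝ :=
  ((Finset.univ.filter (fun μ : Pairing n => P μ)).card : ℝ) /
    (Fintype.card (Pairing n) : ℝ)

end BiasedWalk

namespace BiasedWalk

open Finset Filter
open scoped Classical BigOperators Topology

private lemma sum_eq_card_forall_one {α : Type*} (s : Finset α) (f : α → ℕ)
    (h1 : ∀ v ∈ s, 1 ≤ f v) (h2 : ∑ v ∈ s, f v = s.card) : ∀ v ∈ s, f v = 1 := by
  by_contra hcon
  push_neg at hcon
  obtain ⟨v, hv, hne⟩ := hcon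
  have hlt : ∑ _v ∈ s, 1 < ∑ v ∈ s, f v :=
    Finset.sum_lt_sum h1 ⟨v, hv, lt_of_le_of_ne (h1 v hv) (Ne.symm hne)⟩
  simp [h2] at hlt

private lemma NN_symm {V : Type*} [Fintype V] (G : SimpleGraph V) (A B : Finset V) :
    ∑ v ∈ A, (B.filter (G.Adj v)).card = ∑ v ∈ B, (A.filter (G.Adj v)).card := by
  classical
  simp only [Finset.card_filter]
  rw [Finset.sum_comm]
  apply Finset.sum_congr rfl
  intro w _
  apply Finset.sum_congr rfl
  intro v _
  simp [G.adj_comm]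

private lemma pairCount_eq {V : Type*} [Fintype V] (G : SimpleGraph V) (A B : Finset V) :
    (Finset.univ.filter (fun q : V × V => G.Adj q.1 q.2 ∧ q.1 ∈ A ∧ q.2 ∈ B)).card
      = ∑ v ∈ A, (B.filter (G.Adj v)).card := by
  classical
  rw [Finset.card_filter, ← Finset.univ_product_univ, Finset.sum_product]
  have hrow : ∀ v : V, (∑ w : V, if G.Adj v w ∧ v ∈ A ∧ w ∈ B then (1:ℕ) else 0)
      = if v ∈ A then (B.filter (G.Adj v)).card else 0 := by
    intro v
    split_ifs with hv
    · have hfe : Finset.univ.filter (fun w => G.Adj v w ∧ w ∈ B) = B.filter (G.Adj v) := by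
        ext w; simp [and_comm]
      calc (∑ w : V, if G.Adj v w ∧ v ∈ A ∧ w ∈ B then (1:ℕ) else 0)
          = ∑ w : V, (if G.Adj v w ∧ w ∈ B then (1:ℕ) else 0) := by
            apply Finset.sum_congr rfl; intro w _; simp [hv]
        _ = (Finset.univ.filter (fun w => G.Adj v w ∧ w ∈ B)).card :=
            (Finset.card_filter _ _).symm
        _ = (B.filter (G.Adj v)).card := by rw [hfe]
    · apply Finset.sum_eq_zero; intro w _; simp [hv]
  simp only [hrow]
  rw [Finset.sum_ite_mem, Finset.univ_inter]

theorem statement10 {V : Type*} [Fintype V] (G : SimpleGraph V) (hG : IsCubic G)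
    (S : Finset V)
    (h1 : (sphereSet G (↑S) 1).ncard = 2 * S.card)
    (h2 : (sphereSet G (↑S) 2).ncard = 4 * S.card) :
    edgesIn2 G S = S.card ∧
    ∀ v ∈ sphereSet G (↑S) 1, (G.neighborSet v ∩ ↑S).ncard = 1 := by
  classical
  -- degree facts
  have hdeg : ∀ v : V, (Finset.univ.filter (G.Adj v)).card = 3 := by
    intro v
    have := hG v
    rw [Set.ncard_eq_toFinset_card'] at this
    rw [← this]
    congr 1
    ext w
    simp [SimpleGraph.mem_neighborSet]
  -- finset versions of the spheres
  set N1 : Finset V := Finset.univ.filter (fun v => v ∈ sphereSet G (↑S) 1) with hN1def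
  set N2 : Finset V := Finset.univ.filter (fun v => v ∈ sphereSet G (↑S) 2) with hN2def
  have hco1 : (sphereSet G (↑S) 1) = ↑N1 := by ext v; simp [hN1def]
  have hco2 : (sphereSet G (↑S) 2) = ↑N2 := by ext v; simp [hN2def]
  rw [hco1, Set.ncard_coe_finset] at h1
  rw [hco2, Set.ncard_coe_finset] at h2
  have hmemN1 : ∀ v : V, v ∈ N1 ↔ v ∈ sphereSet G (↑S) 1 := by
    intro v; simp [hN1def]
  have hmemN2 : ∀ v : V, v ∈ N2 ↔ v ∈ sphereSet G (↑S) 2 := by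
    intro v; simp [hN2def]
  have hsph : ∀ (v : V) (d : ℕ), v ∈ sphereSet G (↑S) d ↔
      (∃ s ∈ S, G.dist v s = d) ∧ ∀ s ∈ S, d ≤ G.dist v s := by
    intro v d
    constructor
    · rintro ⟨⟨s, hs, hd⟩, hall⟩
      exact ⟨⟨s, hs, hd⟩, fun s' hs' => hall s' hs'⟩
    · rintro ⟨⟨s, hs, hd⟩, hall⟩
      exact ⟨⟨s, hs, hd⟩, fun s' hs' => hall s' hs'⟩
  rcases S.eq_empty_or_nonempty with hSe | hSne
  · -- trivial case S = ∅
    subst hSe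
    constructor
    · simp [edgesIn2]
    · intro v hv
      rw [hsph] at hv
      obtain ⟨⟨s, hs, -⟩, -⟩ := hv
      simp at hs
  -- main case
  have hScard : 1 ≤ S.card := Finset.card_pos.mpr hSne
  have hN1ne : N1.Nonempty := Finset.card_pos.mp (by omega)
  obtain ⟨v0, hv0⟩ := hN1ne
  have hv0' := (hsph v0 1).mp ((hmemN1 v0).mp hv0)
  have hreach0 : ∀ s ∈ S, G.Reachable v0 s := by
    intro s hs
    have h1le := hv0'.2 s hs
    exact SimpleGraph.Reachable.of_dist_ne_zero (by omega)
  -- reachability from any vertex adjacent (via a path) to some vertex of S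
  have hreach : ∀ v : V, (∃ s ∈ S, G.Reachable v s) → ∀ s ∈ S, G.Reachable v s := by
    rintro v ⟨s0, hs0, hr⟩ s hs
    exact hr.trans ((hreach0 s0 hs0).symm.trans (hreach0 s hs))
  -- characterization of N1
  have hcar1 : ∀ v : V, v ∈ N1 ↔ (v ∉ S ∧ ∃ s ∈ S, G.Adj v s) := by
    intro v
    rw [hmemN1, hsph]
    constructor
    · rintro ⟨⟨s, hs, hd⟩, hall⟩
      refine ⟨?_, s, hs, SimpleGraph.dist_eq_one_iff_adj.mp hd⟩
      intro hvS
      have := hall v hvS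
      rw [SimpleGraph.dist_self] at this
      omega
    · rintro ⟨hvS, s0, hs0, hadj⟩
      refine ⟨⟨s0, hs0, SimpleGraph.dist_eq_one_iff_adj.mpr hadj⟩, ?_⟩
      intro s hs
      have hr : G.Reachable v s := hreach v ⟨s0, hs0, hadj.reachable⟩ s hs
      have hne : v ≠ s := fun h => hvS (h ▸ hs)
      have := SimpleGraph.dist_ne_zero_iff_ne_and_reachable.mpr ⟨hne, hr⟩
      omega
  -- characterization of N2
  have hcar2 : ∀ v : V, v ∈ N2 ↔
      (v ∉ S ∧ (∀ s ∈ S, ¬G.Adj v s) ∧ ∃ u, G.Adj v u ∧ ∃ s ∈ S, G.Adj u s) := by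
    intro v
    rw [hmemN2, hsph]
    constructor
    · rintro ⟨⟨s, hs, hd⟩, hall⟩
      have hvS : v ∉ S := by
        intro hvS
        have := hall v hvS
        rw [SimpleGraph.dist_self] at this
        omega
      have hnadj : ∀ s' ∈ S, ¬G.Adj v s' := by
        intro s' hs' hadj
        have h1 := SimpleGraph.dist_eq_one_iff_adj.mpr hadj
        have := hall s' hs'
        omega
      refine ⟨hvS, hnadj, ?_⟩
      have hp0 : G.dist v s ≠ 0 := by omega
      obtain ⟨p, hp⟩ := SimpleGraph.exists_walk_of_dist_ne_zero hp0
      rw [hd] at hp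
      cases p with
      | nil => simp at hp
      | @cons _ u _ h q =>
        cases q with
        | nil => simp at hp
        | @cons _ x _ h' q' =>
          have hq0 : q'.length = 0 := by
            simp only [SimpleGraph.Walk.length_cons] at hp
            omega
          have hx : x = s := SimpleGraph.Walk.eq_of_length_eq_zero hq0
          exact ⟨u, h, s, hs, hx ▸ h'⟩
    · rintro ⟨hvS, hnadj, u, hvu, s0, hs0, hus0⟩
      have hge : ∀ s ∈ S, 2 ≤ G.dist v s := by
        intro s hs
        have hr : G.Reachable v s :=
          hreach v ⟨s0, hs0, hvu.reachable.trans hus0.reachable⟩ s hs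
        have hne : v ≠ s := fun h => hvS (h ▸ hs)
        have h0 := SimpleGraph.dist_ne_zero_iff_ne_and_reachable.mpr ⟨hne, hr⟩
        have h1 : G.dist v s ≠ 1 := fun h =>
          hnadj s hs (SimpleGraph.dist_eq_one_iff_adj.mp h)
        omega
      refine ⟨⟨s0, hs0, ?_⟩, hge⟩
      have hle : G.dist v s0 ≤ 2 := by
        have := SimpleGraph.dist_le
          (SimpleGraph.Walk.cons hvu (SimpleGraph.Walk.cons hus0 SimpleGraph.Walk.nil))
        simpa using this
      have := hge s0 hs0
      omega
  -- disjointness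
  have hdSN1 : ∀ v ∈ N1, v ∉ S := fun v hv => ((hcar1 v).mp hv).1
  have hdSN2 : ∀ v ∈ N2, v ∉ S := fun v hv => ((hcar2 v).mp hv).1
  have hdN1N2 : Disjoint N1 N2 := by
    rw [Finset.disjoint_left]
    intro v hv1 hv2
    obtain ⟨-, s, hs, hadj⟩ := (hcar1 v).mp hv1
    exact ((hcar2 v).mp hv2).2.1 s hs hadj
  have hdSN1' : Disjoint S N1 := by
    rw [Finset.disjoint_right]; exact hdSN1
  have hdSN2' : Disjoint S N2 := by
    rw [Finset.disjoint_right]; exact hdSN2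
  -- coverage of neighborhoods
  have hcovS : ∀ v ∈ S, Finset.univ.filter (G.Adj v) = (S ∪ N1).filter (G.Adj v) := by
    intro v hv
    ext w
    simp only [Finset.mem_filter, Finset.mem_univ, true_and, Finset.mem_union]
    constructor
    · intro hadj
      refine ⟨?_, hadj⟩
      by_cases hwS : w ∈ S
      · exact Or.inl hwS
      · exact Or.inr ((hcar1 w).mpr ⟨hwS, v, hv, hadj.symm⟩)
    · exact fun h => h.2
  have hcovN1 : ∀ v ∈ N1, Finset.univ.filter (G.Adj v)
      = (S ∪ N1 ∪ N2).filter (G.Adj v) := by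
    intro v hv
    obtain ⟨hvS, sv, hsv, hadjv⟩ := (hcar1 v).mp hv
    ext w
    simp only [Finset.mem_filter, Finset.mem_univ, true_and, Finset.mem_union]
    constructor
    · intro hadj
      refine ⟨?_, hadj⟩
      by_cases hwS : w ∈ S
      · exact Or.inl (Or.inl hwS)
      by_cases hwadjS : ∃ s ∈ S, G.Adj w s
      · exact Or.inl (Or.inr ((hcar1 w).mpr ⟨hwS, hwadjS⟩))
      · push_neg at hwadjS
        exact Or.inr ((hcar2 w).mpr ⟨hwS, hwadjS, v, hadj.symm, sv, hsv, hadjv⟩)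
    · exact fun h => h.2
  -- counting
  have hNNuniv : ∀ A : Finset V, ∑ v ∈ A, ((Finset.univ.filter (G.Adj v)).card) = 3 * A.card := by
    intro A
    rw [Finset.sum_congr rfl (fun v _ => hdeg v)]
    rw [Finset.sum_const, smul_eq_mul, mul_comm]
  have hsplitN1 : ∀ v : V, ((S ∪ N1 ∪ N2).filter (G.Adj v)).card
      = (S.filter (G.Adj v)).card + (N1.filter (G.Adj v)).card + (N2.filter (G.Adj v)).card := by
    intro v
    rw [Finset.filter_union, Finset.filter_union,
      Finset.card_union_of_disjoint, Finset.card_union_of_disjoint]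
    · exact Finset.disjoint_filter_filter hdSN1'
    · exact Finset.disjoint_union_left.mpr
        ⟨Finset.disjoint_filter_filter hdSN2', Finset.disjoint_filter_filter hdN1N2⟩
  have hsplitS : ∀ v : V, ((S ∪ N1).filter (G.Adj v)).card
      = (S.filter (G.Adj v)).card + (N1.filter (G.Adj v)).card := by
    intro v
    rw [Finset.filter_union, Finset.card_union_of_disjoint]
    exact Finset.disjoint_filter_filter hdSN1'
  -- each N1 vertex has at least one neighbour in S
  have hge1 : ∀ v ∈ N1, 1 ≤ (S.filter (G.Adj v)).card := by
    intro v hv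
    obtain ⟨-, s, hs, hadj⟩ := (hcar1 v).mp hv
    exact Finset.card_pos.mpr ⟨s, Finset.mem_filter.mpr ⟨hs, hadj⟩⟩
  -- each N2 vertex has at least one neighbour in N1
  have hge2 : ∀ v ∈ N2, 1 ≤ (N1.filter (G.Adj v)).card := by
    intro v hv
    obtain ⟨hvS, hnadj, u, hvu, s0, hs0, hus0⟩ := (hcar2 v).mp hv
    have huS : u ∉ S := fun h => hnadj u h hvu
    have huN1 : u ∈ N1 := (hcar1 u).mpr ⟨huS, s0, hs0, hus0⟩
    exact Finset.card_pos.mpr ⟨u, Finset.mem_filter.mpr ⟨huN1, hvu⟩⟩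
  -- the three quantities
  set a := ∑ v ∈ N1, (S.filter (G.Adj v)).card with ha
  set b := ∑ v ∈ N1, (N1.filter (G.Adj v)).card with hb
  set c := ∑ v ∈ N1, (N2.filter (G.Adj v)).card with hc
  have htot : a + b + c = 6 * S.card := by
    have h6 : ∑ v ∈ N1, ((Finset.univ.filter (G.Adj v)).card) = 6 * S.card := by
      rw [hNNuniv, h1]; ring
    rw [← h6]
    rw [Finset.sum_congr rfl (fun v hv => (hcovN1 v hv).symm ▸ (hsplitN1 v))]
    rw [Finset.sum_add_distrib, Finset.sum_add_distrib]
  have hage : 2 * S.card ≤ a := by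
    calc 2 * S.card = ∑ _v ∈ N1, 1 := by rw [Finset.sum_const]; simp [h1]
    _ ≤ a := Finset.sum_le_sum hge1
  have hcge : 4 * S.card ≤ c := by
    have := NN_symm G N1 N2
    calc 4 * S.card = ∑ _v ∈ N2, 1 := by rw [Finset.sum_const]; simp [h2]
    _ ≤ ∑ v ∈ N2, (N1.filter (G.Adj v)).card := Finset.sum_le_sum hge2
    _ = c := by rw [hc, NN_symm G N1 N2]
  have haeq : a = 2 * S.card := by omega
  -- second conclusion : each N1 vertex has exactly one neighbour in S
  have hone : ∀ v ∈ N1, (S.filter (G.Adj v)).card = 1 := by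
    apply sum_eq_card_forall_one N1 _ hge1
    rw [← ha, haeq, h1]
  constructor
  · -- first conclusion
    have hSuniv : ∑ v ∈ S, ((Finset.univ.filter (G.Adj v)).card) = 3 * S.card := hNNuniv S
    rw [Finset.sum_congr rfl (fun v hv => (hcovS v hv).symm ▸ (hsplitS v))] at hSuniv
    rw [Finset.sum_add_distrib] at hSuniv
    have hSN1 : ∑ v ∈ S, (N1.filter (G.Adj v)).card = 2 * S.card := by
      rw [NN_symm G S N1, ← ha, haeq]
    have hSS : ∑ v ∈ S, (S.filter (G.Adj v)).card = S.card := by omega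
    rw [edgesIn2, pairCount_eq, hSS]
  · intro v hv
    have hvN1 : v ∈ N1 := (hmemN1 v).mpr hv
    have h1v := hone v hvN1
    have hset : G.neighborSet v ∩ ↑S = ↑(S.filter (G.Adj v)) := by
      ext w
      simp [SimpleGraph.mem_neighborSet, and_comm]
    rw [hset, Set.ncard_coe_finset, h1v]

end BiasedWalk
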